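/- For all u > 0, 2(u - 1 - log u)(1 + 2u) ≥ 3(u-1)^2. -/

import Mathlib

open Real Set

private noncomputable def hfun : ℝ → ℝ := fun x => (x - x⁻¹) / 2 - Real.log x
private noncomputable def ffun : ℝ → ℝ :=
  fun x => 2 * (x - 1 - Real.log x) * (1 + 2 * x) - 3 * (x - 1) ^ 2

private lemma hasDerivAt_hfun {u : ℝ} (hu : 0 < u) :
    HasDerivAt hfun ((u - 1) ^ 2 / (2 * u ^ 2)) u := by
  have h1 : HasDerivAt (fun x : ℝ => (x - x⁻¹) / 2 - Real.log x)
      ((1 - (-(u ^ 2)⁻¹)) / 2 - u⁻¹) u := by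
    exact (((hasDerivAt_id u).sub (hasDerivAt_inv hu.ne')).div_const 2).sub
      (Real.hasDerivAt_log hu.ne')
  unfold hfun
  convert h1 using 1
  field_simp
  ring

private lemma hasDerivAt_ffun {u : ℝ} (hu : 0 < u) :
    HasDerivAt ffun (4 * hfun u) u := by
  have h1 : HasDerivAt (fun x : ℝ => 2 * (x - 1 - Real.log x) * (1 + 2 * x) - 3 * (x - 1) ^ 2)
      (2 * (1 - 0 - u⁻¹) * (1 + 2 * u) + 2 * (u - 1 - Real.log u) * (2 * 1)
        - 3 * (2 * (u - 1) ^ 1 * (1 - 0))) u := by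
    apply HasDerivAt.sub
    · exact ((((hasDerivAt_id u).sub (hasDerivAt_const u 1)).sub
        (Real.hasDerivAt_log hu.ne')).const_mul 2).mul
        (((hasDerivAt_id u).const_mul 2).const_add 1)
    · exact (((hasDerivAt_id u).sub (hasDerivAt_const u 1)).pow 2).const_mul 3
  unfold ffun
  convert h1 using 1
  unfold hfun
  field_simp
  ring

private lemma hfun_cont : ContinuousOn hfun (Ioi 0) := by
  intro x hx
  exact ((((continuousAt_id.sub (continuousAt_inv₀ (ne_of_gt hx))).div_const 2).sub
    (Real.continuousAt_log (ne_of_gt hx)))).continuousWithinAt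

private lemma hfun_mono : MonotoneOn hfun (Ioi 0) := by
  apply monotoneOn_of_deriv_nonneg (convex_Ioi 0) hfun_cont
  · intro x hx
    rw [interior_Ioi] at hx
    exact (hasDerivAt_hfun hx).differentiableAt.differentiableWithinAt
  · intro x hx
    rw [interior_Ioi] at hx
    rw [(hasDerivAt_hfun hx).deriv]
    positivity

private lemma hfun_one : hfun 1 = 0 := by simp [hfun]

private lemma ffun_cont : ContinuousOn ffun (Ioi 0) := by
  intro x hx
  have : ContinuousAt ffun x := by
    unfold ffun
    fun_prop (disch := exact ne_of_gt hx)
  exact this.continuousWithinAt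

private lemma ffun_nonneg {u : ℝ} (hu : 0 < u) : 0 ≤ ffun u := by
  have f1 : ffun 1 = 0 := by simp [ffun]
  rcases le_total 1 u with hc | hc
  · -- f monotone on Ici 1
    have mono : MonotoneOn ffun (Ici 1) := by
      apply monotoneOn_of_deriv_nonneg (convex_Ici 1)
        (ffun_cont.mono (fun x hx => show (0:ℝ) < x from lt_of_lt_of_le one_pos hx))
      · intro x hx
        rw [interior_Ici] at hx
        exact (hasDerivAt_ffun (lt_trans one_pos hx)).differentiableAt.differentiableWithinAt
      · intro x hx
        rw [interior_Ici] at hx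
        rw [(hasDerivAt_ffun (lt_trans one_pos hx)).deriv]
        have : 0 ≤ hfun x := by
          rw [← hfun_one]
          exact hfun_mono (mem_Ioi.2 one_pos) (mem_Ioi.2 (lt_trans one_pos hx)) hx.le
        linarith
    calc (0:ℝ) = ffun 1 := f1.symm
      _ ≤ ffun u := mono (self_mem_Ici) (mem_Ici.2 hc) hc
  · -- f antitone on Ioc 0 1
    have anti : AntitoneOn ffun (Ioc 0 1) := by
      apply antitoneOn_of_deriv_nonpos (convex_Ioc 0 1)
        (ffun_cont.mono (fun x hx => hx.1))
      · intro x hx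
        rw [interior_Ioc] at hx
        exact (hasDerivAt_ffun hx.1).differentiableAt.differentiableWithinAt
      · intro x hx
        rw [interior_Ioc] at hx
        rw [(hasDerivAt_ffun hx.1).deriv]
        have : hfun x ≤ 0 := by
          rw [← hfun_one]
          exact hfun_mono (mem_Ioi.2 hx.1) (mem_Ioi.2 one_pos) hx.2.le
        linarith
    calc (0:ℝ) = ffun 1 := f1.symm
      _ ≤ ffun u := anti (mem_Ioc.2 ⟨hu, hc⟩) (mem_Ioc.2 ⟨one_pos, le_refl 1⟩) hc

theorem stmt_0 : ∀ u : ℝ, 0 < u →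
    2 * (u - 1 - Real.log u) * (1 + 2 * u) ≥ 3 * (u - 1) ^ 2 := by
  intro u hu
  have := ffun_nonneg hu
  unfold ffun at this
  linarith
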